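/- Let f, g be continuous on [-1,1], let ρ_0 > 0, and let x(t,ρ) be analytic in (t,ρ) on [-1,1] × (−ρ_0, ρ_0), with x(t,0) = 0, satisfying for each |ρ| < ρ_0 the integral equation x(t,ρ) = ρ / (1 − ρ H(t,ρ)), where H(t,ρ) = ∫_{-1}^t (f(s)x(s,ρ) + g(s)) ds. Then the second partial derivative of H(1,ρ) with respect to ρ at ρ = 0 equals 2 ∫_{-1}^1 f(t) G(t) dt, where G(t) = ∫_{-1}^t g(s) ds. -/

import Mathlib

open MeasureTheory intervalIntegral Filter Topology

/-- Let `f, g` be continuous on `[-1,1]` and let `x(t,ρ)` be analytic in `(t,ρ)` on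
`[-1,1] × (−ρ₀, ρ₀)`, with `x(t,0) = 0`, satisfying the fixed-point equation
`x(t,ρ) = ρ / (1 − ρ H(t,ρ))` where `H(t,ρ) = ∫_{-1}^t (f(s) x(s,ρ) + g(s)) ds`.
Then `∂²/∂ρ² H(1,ρ) |_{ρ=0} = 2 ∫_{-1}^1 f(t) G(t) dt`, where `G(t) = ∫_{-1}^t g(s) ds`. -/
theorem second_deriv_H_at_zero
    (f g : ℝ → ℝ)
    (hf : ContinuousOn f (Set.Icc (-1 : ℝ) 1))
    (hg : ContinuousOn g (Set.Icc (-1 : ℝ) 1))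
    (ρ₀ : ℝ) (hρ₀ : 0 < ρ₀)
    (x : ℝ → ℝ → ℝ)
    (hanalytic : AnalyticOnNhd ℝ (fun p : ℝ × ℝ => x p.1 p.2)
      (Set.Icc (-1 : ℝ) 1 ×ˢ Set.Ioo (-ρ₀) ρ₀))
    (hzero : ∀ t ∈ Set.Icc (-1 : ℝ) 1, x t 0 = 0)
    (hfix : ∀ ρ : ℝ, |ρ| < ρ₀ → ∀ t ∈ Set.Icc (-1 : ℝ) 1,
      x t ρ = ρ / (1 - ρ * ∫ s in (-1 : ℝ)..t, (f s * x s ρ + g s))) :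
    iteratedDeriv 2 (fun ρ : ℝ => ∫ t in (-1 : ℝ)..1, (f t * x t ρ + g t)) 0 =
      2 * ∫ t in (-1 : ℝ)..1, f t * ∫ s in (-1 : ℝ)..t, g s := by
  set S : Set (ℝ × ℝ) := Set.Icc (-1 : ℝ) 1 ×ˢ Set.Ioo (-ρ₀) ρ₀ with hSdef
  set X : ℝ × ℝ → ℝ := fun p => x p.1 p.2 with hXdef
  set X1 : ℝ × ℝ → ℝ := fun p => fderiv ℝ X p (0, 1) with hX1def
  set X2 : ℝ × ℝ → ℝ := fun p => fderiv ℝ X1 p (0, 1) with hX2def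
  -- analyticity of the derivatives
  have hX1a : ∀ p ∈ S, AnalyticAt ℝ X1 p := fun p hp =>
    ((ContinuousLinearMap.apply ℝ ℝ ((0 : ℝ), (1 : ℝ))).analyticAt _).comp (hanalytic p hp).fderiv
  have hX2a : ∀ p ∈ S, AnalyticAt ℝ X2 p := fun p hp =>
    ((ContinuousLinearMap.apply ℝ ℝ ((0 : ℝ), (1 : ℝ))).analyticAt _).comp (hX1a p hp).fderiv
  -- partial derivatives in the second variable
  have hline : ∀ (t ρ : ℝ), HasDerivAt (fun r : ℝ => ((t : ℝ), r)) ((0 : ℝ), (1 : ℝ)) ρ :=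
    fun t ρ => (hasDerivAt_const ρ t).prodMk (hasDerivAt_id ρ)
  have hd1 : ∀ t ρ : ℝ, (t, ρ) ∈ S → HasDerivAt (fun r => x t r) (X1 (t, ρ)) ρ := by
    intro t ρ hp
    exact HasFDerivAt.comp_hasDerivAt (f := fun r : ℝ => ((t : ℝ), r)) (x := ρ)
      ((hanalytic _ hp).differentiableAt.hasFDerivAt) (hline t ρ)
  have hd2 : ∀ t ρ : ℝ, (t, ρ) ∈ S → HasDerivAt (fun r => X1 (t, r)) (X2 (t, ρ)) ρ := by
    intro t ρ hp
    exact HasFDerivAt.comp_hasDerivAt (f := fun r : ℝ => ((t : ℝ), r)) (x := ρ)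
      ((hX1a _ hp).differentiableAt.hasFDerivAt) (hline t ρ)
  -- a compact slab inside S
  set δ : ℝ := ρ₀ / 2 with hδdef
  have hδpos : 0 < δ := by positivity
  have hδρ₀ : δ < ρ₀ := by rw [hδdef]; linarith
  set K : Set (ℝ × ℝ) := Set.Icc (-1 : ℝ) 1 ×ˢ Set.Icc (-δ) δ with hKdef
  have hKS : K ⊆ S := Set.prod_mono subset_rfl (Set.Icc_subset_Ioo (by linarith) hδρ₀)
  have hK : IsCompact K := isCompact_Icc.prod isCompact_Icc
  have hmemS : ∀ t ρ : ℝ, t ∈ Set.Icc (-1 : ℝ) 1 → |ρ| < ρ₀ → (t, ρ) ∈ S := by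
    intro t ρ ht hρ
    have h := abs_lt.mp hρ
    exact ⟨ht, h.1, h.2⟩
  -- bounds on the compact slab
  have hcK1 : ContinuousOn (fun p : ℝ × ℝ => f p.1 * X1 p) K :=
    (hf.comp continuousOn_fst fun p hp => hp.1).mul
      (fun p hp => ((hX1a p (hKS hp)).continuousAt).continuousWithinAt)
  have hcK2 : ContinuousOn (fun p : ℝ × ℝ => f p.1 * X2 p) K :=
    (hf.comp continuousOn_fst fun p hp => hp.1).mul
      (fun p hp => ((hX2a p (hKS hp)).continuousAt).continuousWithinAt)
  obtain ⟨C1, hC1⟩ := hK.exists_bound_of_continuousOn hcK1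
  obtain ⟨C2, hC2⟩ := hK.exists_bound_of_continuousOn hcK2
  -- continuity in the first variable, for fixed ρ
  have hxcont : ∀ ρ : ℝ, |ρ| < ρ₀ → ContinuousOn (fun s => x s ρ) (Set.Icc (-1 : ℝ) 1) := by
    intro ρ hρ s hs
    have hc : Continuous fun s : ℝ => (s, ρ) := continuous_id.prodMk continuous_const
    exact (ContinuousAt.comp (f := fun s : ℝ => (s, ρ)) (x := s)
      ((hanalytic _ (hmemS s ρ hs hρ)).continuousAt) hc.continuousAt).continuousWithinAt
  have hX1cont : ∀ ρ : ℝ, |ρ| < ρ₀ → ContinuousOn (fun s => X1 (s, ρ)) (Set.Icc (-1 : ℝ) 1) := by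
    intro ρ hρ s hs
    have hc : Continuous fun s : ℝ => (s, ρ) := continuous_id.prodMk continuous_const
    exact (ContinuousAt.comp (f := fun s : ℝ => (s, ρ)) (x := s)
      ((hX1a _ (hmemS s ρ hs hρ)).continuousAt) hc.continuousAt).continuousWithinAt
  -- the main differentiation-under-the-integral step
  have key : ∀ t ∈ Set.Icc (-1 : ℝ) 1, ∀ ρ' : ℝ, |ρ'| < δ →
      HasDerivAt (fun ρ => ∫ s in (-1 : ℝ)..t, (f s * x s ρ + g s))
        (∫ s in (-1 : ℝ)..t, f s * X1 (s, ρ')) ρ' := by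
    intro t ht ρ' hρ'
    have hρ'ρ₀ : |ρ'| < ρ₀ := lt_trans hρ' hδρ₀
    have hρ'2 := abs_lt.mp hρ'ρ₀
    have hρ'δ := abs_lt.mp hρ'
    have hsub : Set.uIcc (-1 : ℝ) t ⊆ Set.Icc (-1 : ℝ) 1 := by
      rw [Set.uIcc_of_le ht.1]; exact Set.Icc_subset_Icc le_rfl ht.2
    have hsub' : Set.uIoc (-1 : ℝ) t ⊆ Set.Icc (-1 : ℝ) 1 :=
      (Set.uIoc_subset_uIcc (α := ℝ)).trans hsub
    have hεpos : (0 : ℝ) < δ - |ρ'| := by linarith [abs_nonneg ρ', hρ']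
    refine (intervalIntegral.hasDerivAt_integral_of_dominated_loc_of_deriv_le
      (F := fun ρ s => f s * x s ρ + g s) (F' := fun ρ s => f s * X1 (s, ρ))
      (bound := fun _ => C1) (a := (-1 : ℝ)) (b := t) (x₀ := ρ') (Metric.ball_mem_nhds ρ' hεpos)
      ?_ ?_ ?_ ?_ ?_ ?_).2
    · filter_upwards [Ioo_mem_nhds (by linarith : -ρ₀ < ρ') (by linarith : ρ' < ρ₀)] with ρ hρ
      have hρρ₀ : |ρ| < ρ₀ := abs_lt.mpr ⟨hρ.1, hρ.2⟩
      exact (((hf.mono hsub').mul ((hxcont ρ hρρ₀).mono hsub')).add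
        (hg.mono hsub')).aestronglyMeasurable measurableSet_uIoc
    · exact (((hf.mono hsub).mul ((hxcont ρ' hρ'ρ₀).mono hsub)).add
        (hg.mono hsub)).intervalIntegrable
    · exact ((hf.mono hsub').mul ((hX1cont ρ' hρ'ρ₀).mono hsub')).aestronglyMeasurable
        measurableSet_uIoc
    · refine Filter.Eventually.of_forall fun s hs ρ hρ => ?_
      rw [Metric.mem_ball, Real.dist_eq] at hρ
      have habs : |ρ| ≤ |ρ - ρ'| + |ρ'| := by simpa using abs_add_le (ρ - ρ') ρ'
      have hρδ : |ρ| ≤ δ := by linarith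
      exact hC1 (s, ρ) ⟨hsub' hs, abs_le.mp hρδ⟩
    · exact intervalIntegrable_const
    · refine Filter.Eventually.of_forall fun s hs ρ hρ => ?_
      rw [Metric.mem_ball, Real.dist_eq] at hρ
      have habs : |ρ| ≤ |ρ - ρ'| + |ρ'| := by simpa using abs_add_le (ρ - ρ') ρ'
      have hρρ₀' : |ρ| < ρ₀ := by linarith
      exact ((hd1 s ρ (hmemS s ρ (hsub' hs) hρρ₀')).const_mul (f s)).add_const (g s)
  -- second differentiation-under-the-integral step
  have key2 : HasDerivAt (fun ρ => ∫ s in (-1 : ℝ)..1, f s * X1 (s, ρ))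
      (∫ s in (-1 : ℝ)..1, f s * X2 (s, 0)) 0 := by
    have hsub : Set.uIcc (-1 : ℝ) 1 ⊆ Set.Icc (-1 : ℝ) 1 := by
      rw [Set.uIcc_of_le (by norm_num : (-1 : ℝ) ≤ 1)]
    have hsub' : Set.uIoc (-1 : ℝ) 1 ⊆ Set.Icc (-1 : ℝ) 1 :=
      (Set.uIoc_subset_uIcc (α := ℝ)).trans hsub
    have hX2cont : ContinuousOn (fun s => X2 (s, (0 : ℝ))) (Set.Icc (-1 : ℝ) 1) := by
      intro s hs
      have hc : Continuous fun s : ℝ => (s, (0:ℝ)) := continuous_id.prodMk continuous_const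
      exact (ContinuousAt.comp (f := fun s : ℝ => (s, (0:ℝ))) (x := s)
        ((hX2a _ (hmemS s 0 hs (by simpa using hρ₀))).continuousAt) hc.continuousAt).continuousWithinAt
    refine (intervalIntegral.hasDerivAt_integral_of_dominated_loc_of_deriv_le
      (F := fun ρ s => f s * X1 (s, ρ)) (F' := fun ρ s => f s * X2 (s, ρ))
      (bound := fun _ => C2) (a := (-1 : ℝ)) (b := (1 : ℝ)) (x₀ := (0 : ℝ)) (Metric.ball_mem_nhds (0 : ℝ) hδpos)
      ?_ ?_ ?_ ?_ ?_ ?_).2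
    · filter_upwards [Ioo_mem_nhds (by linarith : -ρ₀ < (0:ℝ)) hρ₀] with ρ hρ
      have hρρ₀ : |ρ| < ρ₀ := abs_lt.mpr ⟨hρ.1, hρ.2⟩
      exact ((hf.mono hsub').mul ((hX1cont ρ hρρ₀).mono hsub')).aestronglyMeasurable
        measurableSet_uIoc
    · exact ((hf.mono hsub).mul ((hX1cont 0 (by simpa using hρ₀)).mono hsub)).intervalIntegrable
    · exact ((hf.mono hsub').mul (hX2cont.mono hsub')).aestronglyMeasurable measurableSet_uIoc
    · refine Filter.Eventually.of_forall fun s hs ρ hρ => ?_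
      rw [Metric.mem_ball, Real.dist_eq, sub_zero] at hρ
      exact hC2 (s, ρ) ⟨hsub' hs, abs_le.mp hρ.le⟩
    · exact intervalIntegrable_const
    · refine Filter.Eventually.of_forall fun s hs ρ hρ => ?_
      rw [Metric.mem_ball, Real.dist_eq, sub_zero] at hρ
      have hρρ₀' : |ρ| < ρ₀ := lt_trans hρ hδρ₀
      exact (hd2 s ρ (hmemS s ρ (hsub' hs) hρρ₀')).const_mul (f s)
  -- identify the second partial derivative at (t, 0)
  have hCkey : ∀ t ∈ Set.Icc (-1 : ℝ) 1, X2 (t, 0) = 2 * ∫ s in (-1 : ℝ)..t, g s := by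
    intro t ht
    have hsub : Set.uIcc (-1 : ℝ) t ⊆ Set.Icc (-1 : ℝ) 1 := by
      rw [Set.uIcc_of_le ht.1]; exact Set.Icc_subset_Icc le_rfl ht.2
    set Hf : ℝ → ℝ := fun ρ => ∫ s in (-1 : ℝ)..t, (f s * x s ρ + g s) with hHfdef
    have hHd : HasDerivAt Hf (∫ s in (-1 : ℝ)..t, f s * X1 (s, 0)) 0 :=
      key t ht 0 (by simpa using hδpos)
    have hHc : ContinuousAt Hf 0 := hHd.continuousAt
    have hH0 : Hf 0 = ∫ s in (-1 : ℝ)..t, g s := by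
      refine intervalIntegral.integral_congr fun s hs => ?_
      simp [hzero s (hsub hs)]
    have hq : Filter.Tendsto (fun ρ : ℝ => 1 - ρ * Hf ρ) (𝓝 0) (𝓝 1) := by
      have h0 : Filter.Tendsto (fun ρ : ℝ => ρ * Hf ρ) (𝓝 0) (𝓝 0) := by
        have := (continuousAt_id.mul hHc : ContinuousAt (fun ρ : ℝ => ρ * Hf ρ) 0).tendsto
        exact this.mono_right (le_of_eq (congrArg 𝓝 (by simp)))
      have := (tendsto_const_nhds (α := ℝ) (x := (1 : ℝ)) (f := 𝓝 (0:ℝ))).sub h0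
      simpa using this
    have hqne : ∀ᶠ ρ : ℝ in 𝓝 0, (1 - ρ * Hf ρ) ≠ 0 := hq.eventually_ne one_ne_zero
    have hρ₀ev : ∀ᶠ ρ : ℝ in 𝓝 0, |ρ| < ρ₀ := by
      filter_upwards [Ioo_mem_nhds (by linarith : -ρ₀ < (0:ℝ)) hρ₀] with ρ hρ
      exact abs_lt.mpr ⟨hρ.1, hρ.2⟩
    have hfixev : ∀ᶠ ρ : ℝ in 𝓝 0, x t ρ = ρ / (1 - ρ * Hf ρ) := by
      filter_upwards [hρ₀ev] with ρ hρ
      exact hfix ρ hρ t ht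
    -- first limit : (x t ρ - ρ)/ρ² → ∫ g
    have hlim2 : Filter.Tendsto (fun ρ : ℝ => (x t ρ - ρ) / ρ ^ 2) (𝓝[≠] (0:ℝ))
        (𝓝 (∫ s in (-1 : ℝ)..t, g s)) := by
      have h1 : Filter.Tendsto (fun ρ : ℝ => Hf ρ / (1 - ρ * Hf ρ)) (𝓝 0)
          (𝓝 (∫ s in (-1 : ℝ)..t, g s)) := by
        have := hHc.tendsto.div hq one_ne_zero
        exact this.mono_right (le_of_eq (congrArg 𝓝 (by simp [hH0])))
      refine Filter.Tendsto.congr' ?_ (h1.mono_left nhdsWithin_le_nhds)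
      filter_upwards [eventually_nhdsWithin_of_eventually_nhds (hfixev.and hqne),
        self_mem_nhdsWithin] with ρ hρ hρne
      obtain ⟨hx, hne⟩ := hρ
      have hρ0 : ρ ≠ 0 := Set.mem_compl_singleton_iff.mp hρne
      rw [hx]
      rw [eq_div_iff (pow_ne_zero 2 hρ0), div_mul_eq_mul_div, eq_sub_iff_add_eq, div_add' _ _ _ hne,
        div_left_inj' hne]
      ring
    -- the first partial derivative at (t,0) equals 1
    have hd10 : HasDerivAt (fun ρ => x t ρ) (X1 (t, 0)) 0 :=
      hd1 t 0 (hmemS t 0 ht (by simpa using hρ₀))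
    have hslope : Filter.Tendsto (fun ρ : ℝ => x t ρ / ρ) (𝓝[≠] (0:ℝ)) (𝓝 (X1 (t, 0))) := by
      have h := hasDerivAt_iff_tendsto_slope.mp hd10
      refine Filter.Tendsto.congr' ?_ h
      filter_upwards [self_mem_nhdsWithin] with ρ hρ
      simp [slope_def_field, hzero t ht]
    have hslope1 : Filter.Tendsto (fun ρ : ℝ => x t ρ / ρ) (𝓝[≠] (0:ℝ)) (𝓝 1) := by
      have h1 : Filter.Tendsto (fun ρ : ℝ => (1 - ρ * Hf ρ)⁻¹) (𝓝 0) (𝓝 1) := by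
        simpa using hq.inv₀ one_ne_zero
      refine Filter.Tendsto.congr' ?_ (h1.mono_left nhdsWithin_le_nhds)
      filter_upwards [eventually_nhdsWithin_of_eventually_nhds (hfixev.and hqne),
        self_mem_nhdsWithin] with ρ hρ hρne
      obtain ⟨hx, hne⟩ := hρ
      have hρ0 : ρ ≠ 0 := Set.mem_compl_singleton_iff.mp hρne
      rw [hx]
      field_simp
    have hc1 : X1 (t, 0) = 1 := tendsto_nhds_unique hslope hslope1
    -- L'Hôpital
    have hd20 : HasDerivAt (fun ρ => X1 (t, ρ)) (X2 (t, 0)) 0 :=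
      hd2 t 0 (hmemS t 0 ht (by simpa using hρ₀))
    have hdiv : Filter.Tendsto (fun ρ : ℝ => (X1 (t, ρ) - 1) / (2 * ρ)) (𝓝[≠] (0:ℝ))
        (𝓝 (X2 (t, 0) / 2)) := by
      have h := (hasDerivAt_iff_tendsto_slope.mp hd20).div_const 2
      refine Filter.Tendsto.congr' ?_ h
      filter_upwards [self_mem_nhdsWithin] with ρ hρ
      rw [slope_def_field, hc1, sub_zero, div_div, mul_comm]
    have hlip : Filter.Tendsto (fun ρ : ℝ => (x t ρ - ρ) / ρ ^ 2) (𝓝[≠] (0:ℝ))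
        (𝓝 (X2 (t, 0) / 2)) := by
      refine HasDerivAt.lhopital_zero_nhdsNE ?_ ?_ ?_ ?_ ?_ hdiv
      · filter_upwards [eventually_nhdsWithin_of_eventually_nhds hρ₀ev] with ρ hρ
        exact (hd1 t ρ (hmemS t ρ ht hρ)).sub (hasDerivAt_id ρ)
      · refine Filter.Eventually.of_forall fun ρ => ?_
        simpa using hasDerivAt_pow 2 ρ
      · filter_upwards [self_mem_nhdsWithin] with ρ hρ
        have hρ0 : ρ ≠ 0 := Set.mem_compl_singleton_iff.mp hρ
        exact mul_ne_zero two_ne_zero hρ0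
      · have : Filter.Tendsto (fun ρ : ℝ => x t ρ - ρ) (𝓝 0) (𝓝 0) := by
          have := (hd10.continuousAt.sub continuousAt_id).tendsto
          exact this.mono_right (le_of_eq (congrArg 𝓝 (by simp [hzero t ht])))
        exact this.mono_left nhdsWithin_le_nhds
      · have : Filter.Tendsto (fun ρ : ℝ => ρ ^ 2) (𝓝 0) (𝓝 0) := by
          have := ((continuous_pow 2).tendsto (0:ℝ))
          simpa using this
        exact this.mono_left nhdsWithin_le_nhds
    have := tendsto_nhds_unique hlip hlim2
    linarith
  -- put everything together
  have hev : deriv (fun ρ : ℝ => ∫ t in (-1 : ℝ)..1, (f t * x t ρ + g t)) =ᶠ[𝓝 (0:ℝ)]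
      fun ρ => ∫ s in (-1 : ℝ)..1, f s * X1 (s, ρ) := by
    filter_upwards [Ioo_mem_nhds (by linarith : -δ < (0:ℝ)) hδpos] with ρ hρ
    exact (key 1 (by norm_num) ρ (abs_lt.mpr ⟨hρ.1, hρ.2⟩)).deriv
  have h2 : iteratedDeriv 2 (fun ρ : ℝ => ∫ t in (-1 : ℝ)..1, (f t * x t ρ + g t)) 0
      = deriv (deriv (fun ρ : ℝ => ∫ t in (-1 : ℝ)..1, (f t * x t ρ + g t))) 0 := by
    simp [iteratedDeriv_succ, iteratedDeriv_zero]
  have hsub : Set.uIcc (-1 : ℝ) 1 ⊆ Set.Icc (-1 : ℝ) 1 := by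
    rw [Set.uIcc_of_le (by norm_num : (-1 : ℝ) ≤ 1)]
  rw [h2, hev.deriv_eq, key2.deriv]
  rw [show (∫ s in (-1 : ℝ)..1, f s * X2 (s, 0))
      = ∫ s in (-1 : ℝ)..1, 2 * (f s * ∫ u in (-1 : ℝ)..s, g u) from
    intervalIntegral.integral_congr fun s hs => by rw [hCkey s (hsub hs)]; ring]
  rw [intervalIntegral.integral_const_mul]
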